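/- Let r, t be positive integers, Σ an r×t real rectangular diagonal matrix with nonnegative diagonal entries, D a t×t real diagonal matrix with nonnegative diagonal entries d₁₁,…,d_{tt}, and ε > 0. Define the r×t real rectangular diagonal matrix Δ* with diagonal entries Δ*ⱼⱼ = max{ςⱼⱼ − ε, 0} − ςⱼⱼ for j = 1,…,min(r,t). Then ‖Δ*‖₂ ≤ ε and det[I_t + (Σ+Δ*)ᴴ(Σ+Δ*)D] = ∏_{j=1}^{min(t,r)} (1 + max{ςⱼⱼ − ε, 0}² dⱼⱼ). -/

import Mathlib

open Matrix

/-- The spectral norm (ℓ²→ℓ² operator norm, i.e. largest singular value) of a complex matrix. -/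
noncomputable def specNorm {m n : ℕ} (A : Matrix (Fin m) (Fin n) ℂ) : ℝ :=
  ‖LinearMap.toContinuousLinearMap (Matrix.toEuclideanLin A)‖

/-- The `j`-th diagonal entry of a rectangular matrix, extended by `0` out of range. -/
noncomputable def diagEntry {r t : ℕ} (S : Matrix (Fin r) (Fin t) ℝ) (j : ℕ) : ℝ :=
  if h : j < r ∧ j < t then S ⟨j, h.1⟩ ⟨j, h.2⟩ else 0

lemma sum_fin_ite' {M : Type*} [AddCommMonoid M] (r n : ℕ) (F : Fin r → M) :
    ∑ k : Fin r, (if (k : ℕ) = n then F k else 0) = if h : n < r then F ⟨n, h⟩ else 0 := by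
  by_cases h : n < r
  · rw [dif_pos h, Finset.sum_eq_single (⟨n, h⟩ : Fin r)]
    · simp
    · intro k _ hk
      rw [if_neg (by simpa [Fin.ext_iff] using hk)]
    · simp
  · rw [dif_neg h, Finset.sum_eq_zero]
    intro k _
    rw [if_neg (by omega)]

lemma entry_bound {s ε : ℝ} (hs : 0 ≤ s) (hε : 0 < ε) : |max (s - ε) 0 - s| ≤ ε := by
  have h1 : s - ε ≤ max (s - ε) 0 := le_max_left _ _
  have h2 : max (s - ε) 0 ≤ s := max_le (by linarith) hs
  rw [abs_le]; constructor <;> linarith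

theorem stmt2 (r t : ℕ) (hr : 0 < r) (ht : 0 < t)
    (Sig : Matrix (Fin r) (Fin t) ℝ)
    (hSdiag : ∀ (i : Fin r) (j : Fin t), (i : ℕ) ≠ (j : ℕ) → Sig i j = 0)
    (hSpos : ∀ j, 0 ≤ diagEntry Sig j)
    (d : Fin t → ℝ) (hd : ∀ i, 0 ≤ d i)
    (ε : ℝ) (hε : 0 < ε) :
    -- Δ* : the rectangular diagonal matrix with entries max{ς_jj − ε, 0} − ς_jj
    let Δstar : Matrix (Fin r) (Fin t) ℂ := fun (i : Fin r) (j : Fin t) =>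
      if (i : ℕ) = (j : ℕ) then ((max (Sig i j - ε) 0 - Sig i j : ℝ) : ℂ) else 0
    let SigC : Matrix (Fin r) (Fin t) ℂ := Sig.map Complex.ofReal
    let D : Matrix (Fin t) (Fin t) ℂ := Matrix.diagonal fun i => (d i : ℂ)
    specNorm Δstar ≤ ε ∧
    (1 + (SigC + Δstar)ᴴ * (SigC + Δstar) * D).det =
      ((∏ j : Fin (min r t),
        (1 + max (diagEntry Sig j - ε) 0 ^ 2 * d (Fin.castLE (min_le_right r t) j)) : ℝ) : ℂ) := by
  intro Δstar SigC D
  constructor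
  · -- norm bound
    unfold specNorm
    apply ContinuousLinearMap.opNorm_le_bound _ hε.le
    intro x
    have hTx : ∀ i : Fin r, (LinearMap.toContinuousLinearMap (Matrix.toEuclideanLin Δstar) x) i
        = ∑ j : Fin t, Δstar i j * x j := fun i => rfl
    set G : Fin r → ℝ := fun i => if h : (i : ℕ) < t then ‖x ⟨(i : ℕ), h⟩‖ ^ 2 else 0 with hG
    have hbound : ∀ i : Fin r,
        ‖(LinearMap.toContinuousLinearMap (Matrix.toEuclideanLin Δstar) x) i‖ ^ 2
          ≤ ε ^ 2 * G i := by
      intro i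
      rw [hTx i]
      have hsum : ∑ j : Fin t, Δstar i j * x j
          = ∑ j : Fin t, (if (j : ℕ) = (i : ℕ) then Δstar i j * x j else 0) := by
        apply Finset.sum_congr rfl
        intro j _
        by_cases hj : (i : ℕ) = (j : ℕ)
        · rw [if_pos hj.symm]
        · rw [if_neg (fun h => hj h.symm)]
          simp [Δstar, hj]
      rw [hsum, sum_fin_ite']
      by_cases h : (i : ℕ) < t
      · rw [dif_pos h]
        simp only [hG, dif_pos h]
        rw [norm_mul, mul_pow]
        have hs : 0 ≤ Sig i ⟨(i : ℕ), h⟩ := by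
          have := hSpos (i : ℕ)
          rw [diagEntry, dif_pos ⟨i.isLt, h⟩] at this
          simpa using this
        have hΔ : ‖Δstar i ⟨(i : ℕ), h⟩‖ ≤ ε := by
          simp only [Δstar, if_pos rfl]
          rw [Complex.norm_real]
          exact entry_bound hs hε
        have h1 : ‖Δstar i ⟨(i : ℕ), h⟩‖ ^ 2 ≤ ε ^ 2 :=
          pow_le_pow_left₀ (norm_nonneg _) hΔ 2
        exact mul_le_mul_of_nonneg_right h1 (sq_nonneg _)
      · rw [dif_neg h]
        simp [hG, dif_neg h]
    have hGsum : ∑ i : Fin r, G i ≤ ∑ j : Fin t, ‖x j‖ ^ 2 := by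
      have : ∀ i : Fin r, G i = ∑ j : Fin t, (if (j : ℕ) = (i : ℕ) then ‖x j‖ ^ 2 else 0) := by
        intro i
        rw [sum_fin_ite']
      simp_rw [this]
      rw [Finset.sum_comm]
      apply Finset.sum_le_sum
      intro j _
      have : ∑ i : Fin r, (if (j : ℕ) = (i : ℕ) then ‖x j‖ ^ 2 else 0)
          = ∑ i : Fin r, (if (i : ℕ) = (j : ℕ) then ‖x j‖ ^ 2 else 0) := by
        apply Finset.sum_congr rfl; intro i _; simp [eq_comm]
      rw [this, sum_fin_ite' r (j : ℕ) (fun _ => ‖x j‖ ^ 2)]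
      split
      · exact le_refl _
      · positivity
    calc ‖(LinearMap.toContinuousLinearMap (Matrix.toEuclideanLin Δstar) x)‖
        = Real.sqrt (∑ i : Fin r,
            ‖(LinearMap.toContinuousLinearMap (Matrix.toEuclideanLin Δstar) x) i‖ ^ 2) := by
          rw [EuclideanSpace.norm_eq]
      _ ≤ Real.sqrt (ε ^ 2 * ∑ j : Fin t, ‖x j‖ ^ 2) := by
          apply Real.sqrt_le_sqrt
          calc ∑ i : Fin r, ‖(LinearMap.toContinuousLinearMap (Matrix.toEuclideanLin Δstar) x) i‖ ^ 2
              ≤ ∑ i : Fin r, ε ^ 2 * G i := Finset.sum_le_sum (fun i _ => hbound i)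
            _ = ε ^ 2 * ∑ i : Fin r, G i := by rw [Finset.mul_sum]
            _ ≤ ε ^ 2 * ∑ j : Fin t, ‖x j‖ ^ 2 :=
                mul_le_mul_of_nonneg_left hGsum (sq_nonneg ε)
      _ = ε * Real.sqrt (∑ j : Fin t, ‖x j‖ ^ 2) := by
          rw [Real.sqrt_mul (sq_nonneg ε), Real.sqrt_sq hε.le]
      _ = ε * ‖x‖ := by rw [EuclideanSpace.norm_eq]
  · -- determinant
    set A : Matrix (Fin r) (Fin t) ℂ := SigC + Δstar with hA
    have hAentry : ∀ (i : Fin r) (j : Fin t),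
        A i j = if (i : ℕ) = (j : ℕ) then ((max (Sig i j - ε) 0 : ℝ) : ℂ) else 0 := by
      intro i j
      rw [hA, Matrix.add_apply]; simp only [SigC, Δstar, Matrix.map_apply]
      by_cases hij : (i : ℕ) = (j : ℕ)
      · rw [if_pos hij, if_pos hij]
        push_cast
        ring
      · rw [if_neg hij, if_neg hij, hSdiag i j hij]
        simp
    set g : Fin t → ℂ := fun j =>
      1 + (if (j : ℕ) < r then ((max (diagEntry Sig (j : ℕ) - ε) 0 : ℝ) : ℂ) ^ 2 else 0) * (d j : ℂ)
      with hg
    have hM : 1 + Aᴴ * A * D = Matrix.diagonal g := by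
      ext i j
      rw [Matrix.add_apply, Matrix.mul_diagonal, Matrix.mul_apply]
      simp_rw [Matrix.conjTranspose_apply]
      by_cases hij : i = j
      · subst hij
        have hterm : ∀ k : Fin r, star (A k i) * A k i =
            if (k : ℕ) = (i : ℕ)
            then ((max (diagEntry Sig (i : ℕ) - ε) 0 : ℝ) : ℂ) ^ 2 else 0 := by
          intro k
          rw [hAentry]
          by_cases hk : (k : ℕ) = (i : ℕ)
          · rw [if_pos hk, if_pos hk]
            have hSig : Sig k i = diagEntry Sig (i : ℕ) := by
              rw [diagEntry, dif_pos ⟨hk ▸ k.isLt, i.isLt⟩]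
              congr 1 <;> exact Fin.ext (by simp [hk])
            rw [hSig, Complex.star_def, Complex.conj_ofReal, sq]
          · rw [if_neg hk, if_neg hk]
            simp
        simp_rw [hterm]
        rw [sum_fin_ite', dite_eq_ite, Matrix.one_apply_eq, Matrix.diagonal_apply_eq]
      · have hterm0 : ∀ k : Fin r, star (A k i) * A k j = 0 := by
          intro k
          by_cases hk : (k : ℕ) = (i : ℕ)
          · have hkj : (k : ℕ) ≠ (j : ℕ) := by
              intro h
              exact hij (Fin.ext (hk.symm.trans h))
            rw [hAentry k j, if_neg hkj, mul_zero]
          · rw [hAentry k i, if_neg hk, star_zero, zero_mul]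
        simp_rw [hterm0]
        rw [Matrix.one_apply_ne hij, Matrix.diagonal_apply_ne _ hij]
        simp
    rw [hM, Matrix.det_diagonal]
    set f' : ℕ → ℝ := fun n =>
      if h : n < t then
        1 + (if n < r then (max (diagEntry Sig n - ε) 0) ^ 2 else 0) * d ⟨n, h⟩
      else 1 with hf'
    have hgf : ∀ i : Fin t, g i = ((f' (i : ℕ) : ℝ) : ℂ) := by
      intro i
      rw [hg, hf']
      simp only [dif_pos i.isLt]
      by_cases h : (i : ℕ) < r
      · rw [if_pos h, if_pos h]
        push_cast
        norm_num
      · rw [if_neg h, if_neg h]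
        push_cast
        norm_num
    simp_rw [hgf]
    rw [← Complex.ofReal_prod]
    congr 1
    have h1 : ∏ i : Fin t, f' (i : ℕ) = ∏ n ∈ Finset.range t, f' n :=
      Fin.prod_univ_eq_prod_range f' t
    have h2 : ∏ n ∈ Finset.range (min r t), f' n = ∏ n ∈ Finset.range t, f' n := by
      apply Finset.prod_subset (Finset.range_subset_range.mpr (min_le_right r t))
      intro x hx hx'
      rw [Finset.mem_range] at hx
      rw [Finset.mem_range] at hx'
      have hxr : ¬ x < r := by omega
      rw [hf']
      simp only [dif_pos hx, if_neg hxr, zero_mul, add_zero]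
    have h3 : ∏ n ∈ Finset.range (min r t), f' n
        = ∏ j : Fin (min r t), f' (j : ℕ) :=
      (Fin.prod_univ_eq_prod_range f' (min r t)).symm
    rw [h1, ← h2, h3]
    apply Finset.prod_congr rfl
    intro j _
    have hjt : (j : ℕ) < t := lt_of_lt_of_le j.isLt (min_le_right r t)
    have hjr : (j : ℕ) < r := lt_of_lt_of_le j.isLt (min_le_left r t)
    rw [hf']
    simp only [dif_pos hjt, if_pos hjr]
    rfl
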